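/- Let V: X × X̂ → ℝ≥0 be an alternating simulation function from a non-blocking finite system Σ̂ to Σ (both without internal inputs), with associated functions α̃, σ̃ ∈ K∞ (σ̃ < id), ρ̃_ext ∈ K∞ ∪ {0}, ε̃ ≥ 0, and suppose all inputs of Σ̂ satisfy ‖û‖ ≤ v. Then for any initial pair (x₀, x̂₀) and any sequence of abstract inputs û(k), there exist input and state sequences of Σ and Σ̂ such that for all k, V(x(k), x̂(k)) ≤ max(σ̃^k(V(x₀, x̂₀)), ρ̃_ext(v), ε̃), and consequently limsup_k ‖h(x(k)) − ĥ(x̂(k))‖ ≤ α̃⁻¹(max(ρ̃_ext(v), ε̃)). -/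

import Mathlib

open Filter

/-- A class K∞ function: continuous, strictly increasing, vanishing at 0, and unbounded. -/
def IsKInf (f : NNReal → NNReal) : Prop :=
  Continuous f ∧ StrictMono f ∧ f 0 = 0 ∧ Filter.Tendsto f Filter.atTop Filter.atTop

lemma iter_tendsto_zero (σt : NNReal → NNReal) (hc : Continuous σt)
    (hlt : ∀ s, 0 < s → σt s < s) (h0 : σt 0 = 0) (s : NNReal) :
    Tendsto (fun k => σt^[k] s) atTop (nhds 0) := by
  have hle : ∀ t, σt t ≤ t := fun t =>
    (eq_or_lt_of_le (zero_le : 0 ≤ t)).elim (fun h => by simp [← h, h0]) (fun h => (hlt t h).le)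
  have hanti : Antitone (fun k => σt^[k] s) :=
    antitone_nat_of_succ_le (fun n => by rw [Function.iterate_succ_apply']; exact hle _)
  obtain ⟨L, hL⟩ : ∃ L, Tendsto (fun k => σt^[k] s) atTop (nhds L) :=
    ⟨_, tendsto_atTop_ciInf hanti (OrderBot.bddBelow _)⟩
  have hfix : σt L = L := by
    have h1 : Tendsto (fun k => σt^[k+1] s) atTop (nhds L) :=
      hL.comp (tendsto_add_atTop_nat 1)
    have h2 : Tendsto (fun k => σt (σt^[k] s)) atTop (nhds (σt L)) :=
      (hc.tendsto L).comp hL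
    have he : (fun k => σt^[k+1] s) = fun k => σt (σt^[k] s) :=
      funext fun k => Function.iterate_succ_apply' _ _ _
    rw [he] at h1
    exact tendsto_nhds_unique h2 h1
  have hL0 : L = 0 := by
    by_contra hne
    exact absurd hfix (ne_of_lt (hlt L (zero_lt_iff.mpr hne)))
  exact hL0 ▸ hL

theorem stmt14
    {X U Xh Uh Y : Type*} [NormedAddCommGroup Y] [NormedAddCommGroup Uh]
    (f : X → U → Set X) (fh : Xh → Uh → Set Xh)
    (h : X → Y) (hh : Xh → Y)
    -- non-blocking systems:
    (hnbf : ∀ x u, (f x u).Nonempty) (hnbfh : ∀ xh uh, (fh xh uh).Nonempty)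
    (V : X → Xh → NNReal)
    (αt σt ρext αtInv : NNReal → NNReal) (εt : NNReal)
    (hαt : IsKInf αt)
    (hαtInv : ∀ s, αtInv (αt s) = s ∧ αt (αtInv s) = s)
    (hσt : IsKInf σt) (hσtlt : ∀ s : NNReal, 0 < s → σt s < s)
    (hρ : IsKInf ρext ∨ ρext = 0)
    -- V is an alternating simulation function from Σ̂ to Σ:
    (hV1 : ∀ (x : X) (xh : Xh), αt ‖h x - hh xh‖₊ ≤ V x xh)
    (hV2 : ∀ (x : X) (xh : Xh) (uh : Uh), ∃ u : U,
      ∀ xd ∈ f x u, ∃ xhd ∈ fh xh uh,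
        V xd xhd ≤ max (σt (V x xh)) (max (ρext ‖uh‖₊) εt))
    -- inputs of Σ̂ are bounded by v:
    (v : NNReal) (hbound : ∀ uh : Uh, ‖uh‖₊ ≤ v) :
    ∀ (x0 : X) (xh0 : Xh) (uh : ℕ → Uh),
      ∃ (u : ℕ → U) (x : ℕ → X) (xh : ℕ → Xh),
        x 0 = x0 ∧ xh 0 = xh0 ∧
        (∀ k : ℕ, x (k + 1) ∈ f (x k) (u k) ∧ xh (k + 1) ∈ fh (xh k) (uh k)) ∧
        (∀ k : ℕ, V (x k) (xh k) ≤ max (σt^[k] (V x0 xh0)) (max (ρext v) εt)) ∧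
        limsup (fun k : ℕ => ‖h (x k) - hh (xh k)‖₊) atTop ≤
          αtInv (max (ρext v) εt) := by
  classical
  intro x0 xh0 uh
  choose u' hu' using hV2
  -- construct the trajectories recursively
  let nx : X × Xh → ℕ → X := fun p k => (hnbf p.1 (u' p.1 p.2 (uh k))).choose
  have hnx : ∀ p k, nx p k ∈ f p.1 (u' p.1 p.2 (uh k)) :=
    fun p k => (hnbf p.1 (u' p.1 p.2 (uh k))).choose_spec
  let step : X × Xh → ℕ → X × Xh := fun p k =>
    (nx p k, (hu' p.1 p.2 (uh k) (nx p k) (hnx p k)).choose)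
  have hstep : ∀ p k, (step p k).2 ∈ fh p.2 (uh k) ∧
      V (step p k).1 (step p k).2 ≤
        max (σt (V p.1 p.2)) (max (ρext ‖uh k‖₊) εt) := by
    intro p k
    obtain ⟨hm, hb⟩ := (hu' p.1 p.2 (uh k) (nx p k) (hnx p k)).choose_spec
    exact ⟨hm, hb⟩
  let p : ℕ → X × Xh := fun k => Nat.rec (x0, xh0) (fun k ih => step ih k) k
  have hp0 : p 0 = (x0, xh0) := rfl
  have hps : ∀ k, p (k + 1) = step (p k) k := fun k => rfl
  -- monotonicity facts
  have hσmono : Monotone σt := hσt.2.1.monotone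
  have hσle : ∀ t, σt t ≤ t := fun t =>
    (eq_or_lt_of_le (zero_le : 0 ≤ t)).elim (fun ht => by simp [← ht, hσt.2.2.1])
      (fun ht => (hσtlt t ht).le)
  have hρmono : Monotone ρext := by
    rcases hρ with hρ' | hρ'
    · exact hρ'.2.1.monotone
    · intro a b _; simp [hρ']
  -- the key invariant
  have hMbound : ∀ k, V (p k).1 (p k).2 ≤
      max (σt^[k] (V x0 xh0)) (max (ρext v) εt) := by
    intro k
    induction k with
    | zero => simp [hp0]
    | succ n ih =>
      have hb := (hstep (p n) n).2
      rw [← hps n] at hb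
      calc V (p (n+1)).1 (p (n+1)).2
          ≤ max (σt (V (p n).1 (p n).2)) (max (ρext ‖uh n‖₊) εt) := hb
        _ ≤ max (σt (max (σt^[n] (V x0 xh0)) (max (ρext v) εt)))
            (max (ρext v) εt) := by
            gcongr
            · exact hσmono ih
            · exact hρmono (hbound (uh n))
        _ ≤ max (σt^[n+1] (V x0 xh0)) (max (ρext v) εt) := by
            rw [Function.iterate_succ_apply']
            rcases max_cases (σt^[n] (V x0 xh0)) (max (ρext v) εt) with
              ⟨he, _⟩ | ⟨he, _⟩
            · rw [he]
            · rw [he]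
              exact max_le (le_max_of_le_right (hσle _)) (le_max_right _ _)
  -- αtInv is monotone and continuous
  have hαmono : Monotone αtInv := by
    intro a b hab
    have hiff := hαt.2.1.le_iff_le (a := αtInv a) (b := αtInv b)
    rw [(hαtInv a).2, (hαtInv b).2] at hiff
    exact hiff.mp hab
  have hαcont : Continuous αtInv := by
    have hsurj : Function.Surjective αt := fun s => ⟨αtInv s, (hαtInv s).2⟩
    let e : NNReal ≃o NNReal := StrictMono.orderIsoOfSurjective αt hαt.2.1 hsurj
    have hei : αtInv = ⇑e.symm := by
      funext s
      have hse : αt (e.symm s) = s := e.apply_symm_apply s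
      calc αtInv s = αtInv (αt (e.symm s)) := by rw [hse]
        _ = e.symm s := (hαtInv _).1
    rw [hei]
    exact e.symm.continuous
  set M := max (ρext v) εt with hM
  have hle : ∀ k : ℕ, ‖h (p k).1 - hh (p k).2‖₊ ≤
      αtInv (max (σt^[k] (V x0 xh0)) M) := by
    intro k
    have h1 : αt ‖h (p k).1 - hh (p k).2‖₊ ≤ max (σt^[k] (V x0 xh0)) M :=
      (hV1 _ _).trans (hMbound k)
    have h2 := hαmono h1
    rwa [(hαtInv _).1] at h2
  have htend : Tendsto (fun k : ℕ => αtInv (max (σt^[k] (V x0 xh0)) M)) atTop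
      (nhds (αtInv M)) := by
    have h0 : Tendsto (fun k : ℕ => σt^[k] (V x0 xh0)) atTop (nhds 0) :=
      iter_tendsto_zero σt hσt.1 hσtlt hσt.2.2.1 _
    have hmax : Tendsto (fun k : ℕ => max (σt^[k] (V x0 xh0)) M) atTop
        (nhds (max 0 M)) := h0.max tendsto_const_nhds
    rw [max_eq_right (zero_le : 0 ≤ M)] at hmax
    exact (hαcont.tendsto M).comp hmax
  refine ⟨fun k => u' (p k).1 (p k).2 (uh k), fun k => (p k).1, fun k => (p k).2,
    rfl, rfl, ?_, hMbound, ?_⟩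
  · intro k
    constructor
    · show (p (k+1)).1 ∈ f (p k).1 (u' (p k).1 (p k).2 (uh k))
      rw [hps k]
      exact hnx (p k) k
    · show (p (k+1)).2 ∈ fh (p k).2 (uh k)
      rw [hps k]
      exact (hstep (p k) k).1
  · calc limsup (fun k : ℕ => ‖h (p k).1 - hh (p k).2‖₊) atTop
        ≤ limsup (fun k : ℕ => αtInv (max (σt^[k] (V x0 xh0)) M)) atTop :=
          limsup_le_limsup (Eventually.of_forall hle)
            (hv := htend.isBoundedUnder_le)
      _ = αtInv M := htend.limsup_eq
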